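/- For n ≥ 2, the dicyclic group Dic_n = ⟨F, G | G² = F^n, F^{2n} = 1, G⁻¹FG = F^{-1}⟩ is a split metacyclic group (isomorphic to a semidirect product of two cyclic groups) if and only if n is odd. -/

import Mathlib

/-- Relations for the metacyclic group `M(u,n,r,k)` with presentation
`⟨F, G | F^n = 1, G^u = F^r, G⁻¹FG = F^k⟩`. -/
def metacyclicRels (u n r : ℕ) (k : ℤ) : Set (FreeGroup (Fin 2)) :=
  { FreeGroup.of 0 ^ n,
    FreeGroup.of 1 ^ u * (FreeGroup.of 0 ^ r)⁻¹,
    (FreeGroup.of 1)⁻¹ * FreeGroup.of 0 * FreeGroup.of 1 * (FreeGroup.of 0 ^ k)⁻¹ }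

/-- The metacyclic group `M(u,n,r,k)` as a presented group. -/
def Metacyclic (u n r : ℕ) (k : ℤ) : Type := PresentedGroup (metacyclicRels u n r k)

instance (u n r : ℕ) (k : ℤ) : Group (Metacyclic u n r k) :=
  inferInstanceAs (Group (PresentedGroup _))

/-- The generator `F` of `M(u,n,r,k)`. -/
def MF (u n r : ℕ) (k : ℤ) : Metacyclic u n r k := PresentedGroup.of 0

/-- The generator `G` of `M(u,n,r,k)`. -/
def MG (u n r : ℕ) (k : ℤ) : Metacyclic u n r k := PresentedGroup.of 1

/-- A group is split metacyclic if it is isomorphic to a semidirect product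
of two (finite) cyclic groups. -/
def IsSplitMetacyclic (H : Type*) [Group H] : Prop :=
  ∃ (n' m' : ℕ) (φ : Multiplicative (ZMod m') →* MulAut (Multiplicative (ZMod n'))),
    0 < n' ∧ 0 < m' ∧
      Nonempty (H ≃* (Multiplicative (ZMod n') ⋊[φ] Multiplicative (ZMod m')))

/-- The dicyclic group `Dic_n = M(2, 2n, n, -1)`. -/
def Dicyclic (n : ℕ) : Type := Metacyclic 2 (2*n) n (-1)

instance (n : ℕ) : Group (Dicyclic n) := inferInstanceAs (Group (Metacyclic 2 (2*n) n (-1)))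

/-- The generator `F` of `Dic_n`. -/
def DF (n : ℕ) : Dicyclic n := MF 2 (2*n) n (-1)

/-- The generator `G` of `Dic_n`. -/
def DG (n : ℕ) : Dicyclic n := MG 2 (2*n) n (-1)


namespace DicP

structure Model (n : ℕ) where
  a : ZMod (2*n)
  b : Bool

namespace Model
variable {n : ℕ}

@[ext] theorem ext' {x y : Model n} (h1 : x.a = y.a) (h2 : x.b = y.b) : x = y := by
  cases x; cases y; simp_all

theorem nn : (n : ZMod (2*n)) + (n : ZMod (2*n)) = 0 := by
  have h := ZMod.natCast_self (2*n)
  push_cast at h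
  linear_combination h

instance : Mul (Model n) :=
  ⟨fun x y => ⟨x.a + (if x.b then -y.a else y.a) + (if x.b && y.b then (n : ZMod (2*n)) else 0),
    Bool.xor x.b y.b⟩⟩
instance : One (Model n) := ⟨⟨0, false⟩⟩
instance : Inv (Model n) := ⟨fun x => ⟨if x.b then x.a + n else -x.a, x.b⟩⟩

theorem mul_def (x y : Model n) : x * y =
    ⟨x.a + (if x.b then -y.a else y.a) + (if x.b && y.b then (n : ZMod (2*n)) else 0),
      Bool.xor x.b y.b⟩ := rfl
theorem one_def : (1 : Model n) = ⟨0, false⟩ := rfl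
theorem inv_def (x : Model n) : x⁻¹ = ⟨if x.b then x.a + n else -x.a, x.b⟩ := rfl

instance : Group (Model n) where
  mul_assoc x y z := by
    rcases x with ⟨a, (_|_)⟩ <;> rcases y with ⟨c, (_|_)⟩ <;> rcases z with ⟨d, (_|_)⟩ <;>
      · refine ext' ?_ ?_ <;> simp [mul_def] <;> first | ring1 | linear_combination (nn (n := n))
  one_mul x := by rcases x with ⟨a, (_|_)⟩ <;> · refine ext' ?_ ?_ <;> simp [mul_def, one_def]
  mul_one x := by rcases x with ⟨a, (_|_)⟩ <;> · refine ext' ?_ ?_ <;> simp [mul_def, one_def]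
  inv_mul_cancel x := by
    rcases x with ⟨a, (_|_)⟩ <;> · refine ext' ?_ ?_ <;>
      simp [mul_def, one_def, inv_def] <;> first | ring1 | linear_combination (nn (n := n))

def f : Model n := ⟨1, false⟩
def g : Model n := ⟨0, true⟩
def z : Model n := ⟨(n : ZMod (2*n)), false⟩

theorem f_pow (k : ℕ) : (f : Model n) ^ k = ⟨(k : ZMod (2*n)), false⟩ := by
  induction k with
  | zero => simp [one_def]
  | succ m ih => rw [pow_succ, ih]; refine ext' ?_ ?_ <;> simp [mul_def, f] <;> push_cast <;> ring

theorem f_pow_n : (f : Model n) ^ n = z := by rw [f_pow]; rfl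

theorem f2n : (f : Model n) ^ (2*n) = 1 := by
  rw [f_pow, ZMod.natCast_self]; rfl

theorem sq_true (x : Model n) (hx : x.b = true) : x * x = z := by
  refine ext' ?_ ?_ <;> simp [mul_def, hx, z]

theorem z_sq : (z : Model n) * z = 1 := by
  refine ext' ?_ ?_ <;> simp [mul_def, z, one_def, nn]

theorem g_sq : (g : Model n) * g = z := sq_true g rfl

theorem pow4 (x : Model n) : x ^ 4 = (x*x) * (x*x) := by
  rw [show (4:ℕ) = 2+2 from rfl, pow_add, pow_two]

theorem g_pow4 : (g : Model n) ^ 4 = 1 := by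
  rw [pow4, g_sq, z_sq]

theorem fg_pow4 : ((f*g) : Model n) ^ 4 = 1 := by
  rw [pow4, sq_true (f*g) (by simp [mul_def, f, g]), z_sq]

theorem conj_rel : (g : Model n)⁻¹ * f * g = f⁻¹ := by
  refine ext' ?_ ?_ <;> simp [mul_def, inv_def, f, g] <;> ring_nf
  · linear_combination (nn (n := n))

theorem g_sq_eq : (g : Model n) * g = f ^ n := by rw [g_sq, f_pow_n]

theorem z_ne_one (hn : 2 ≤ n) : (z : Model n) ≠ 1 := by
  intro h
  have h1 : ((n : ℕ) : ZMod (2*n)) = 0 := congrArg Model.a h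
  rw [ZMod.natCast_eq_zero_iff] at h1
  exact absurd (Nat.le_of_dvd (by omega) h1) (by omega)

theorem fg_ne_gf (hn : 2 ≤ n) : (f : Model n) * g ≠ g * f := by
  intro h
  have ha : ((1 : ZMod (2*n))) + 0 + 0 = (0 : ZMod (2*n)) + -1 + 0 := by
    have := congrArg Model.a h
    simpa [mul_def, f, g] using this
  have h2 : ((2:ℕ) : ZMod (2*n)) = 0 := by push_cast; linear_combination ha
  rw [ZMod.natCast_eq_zero_iff] at h2
  have := Nat.le_of_dvd (by norm_num) h2
  omega

theorem unique_inv (hn : 2 ≤ n) (w : Model n) (hw : w * w = 1) : w = 1 ∨ w = z := by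
  haveI : NeZero (2*n) := ⟨by omega⟩
  rcases w with ⟨i, (_|_)⟩
  · have hi : i + i = 0 := by
      have := congrArg Model.a hw
      simpa [mul_def, one_def] using this
    have hi2 : ((i.val + i.val : ℕ) : ZMod (2*n)) = 0 := by
      push_cast [ZMod.natCast_zmod_val]; exact hi
    rw [ZMod.natCast_eq_zero_iff] at hi2
    have hlt : i.val < 2*n := ZMod.val_lt i
    obtain ⟨t, ht⟩ := hi2
    have htlt : t < 2 := by
      by_contra hge
      push_neg at hge
      have := Nat.mul_le_mul_left (2*n) hge
      omega
    have : i.val = 0 ∨ i.val = n := by interval_cases t <;> omega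
    rcases this with h | h
    · left; refine ext' ?_ rfl; show i = 0
      rw [← ZMod.natCast_zmod_val i, h]; simp
    · right; refine ext' ?_ rfl; show i = (n : ZMod (2*n))
      rw [← ZMod.natCast_zmod_val i, h]
  · exfalso
    have h1 := congrArg Model.a hw
    simp [mul_def, one_def] at h1
    have h2 : ((n:ℕ) : ZMod (2*n)) = 0 := by push_cast; linear_combination h1
    rw [ZMod.natCast_eq_zero_iff] at h2
    exact absurd (Nat.le_of_dvd (by omega) h2) (by omega)
end Model
end DicP
section Dic
open DicP

variable {n : ℕ}

namespace DicP

abbrev rels (n : ℕ) : Set (FreeGroup (Fin 2)) := metacyclicRels 2 (2*n) n (-1)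

theorem mk_rel {r : FreeGroup (Fin 2)} (h : r ∈ rels n) :
    (PresentedGroup.mk (rels n) r : Dicyclic n) = 1 :=
  (QuotientGroup.eq_one_iff r).mpr (Subgroup.subset_normalClosure h)

theorem DF_def : DF n = PresentedGroup.mk (rels n) (FreeGroup.of 0) := rfl
theorem DG_def : DG n = PresentedGroup.mk (rels n) (FreeGroup.of 1) := rfl

theorem mem1 : FreeGroup.of 0 ^ (2*n) ∈ rels n := Set.mem_insert _ _
theorem mem2 : FreeGroup.of 1 ^ 2 * (FreeGroup.of 0 ^ n)⁻¹ ∈ rels n :=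
  Set.mem_insert_of_mem _ (Set.mem_insert _ _)
theorem mem3 : (FreeGroup.of 1)⁻¹ * FreeGroup.of 0 * FreeGroup.of 1 *
    (FreeGroup.of 0 ^ (-1 : ℤ))⁻¹ ∈ rels n :=
  Set.mem_insert_of_mem _ (Set.mem_insert_of_mem _ rfl)

theorem relF : (DF n) ^ (2*n) = 1 := by
  have h := mk_rel (mem1 (n := n))
  rw [map_pow] at h
  exact h

theorem relG : (DG n) ^ 2 = (DF n) ^ n := by
  have h := mk_rel (mem2 (n := n))
  rw [map_mul, map_inv, map_pow, map_pow] at h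
  rw [← DF_def, ← DG_def] at h
  exact mul_inv_eq_one.mp h

theorem relC : (DG n)⁻¹ * DF n * DG n = (DF n)⁻¹ := by
  have h := mk_rel (mem3 (n := n))
  rw [map_mul, map_mul, map_mul, map_inv, map_inv, map_zpow] at h
  rw [← DF_def, ← DG_def] at h
  have h' : (DG n)⁻¹ * DF n * DG n = (DF n) ^ (-1 : ℤ) := mul_inv_eq_one.mp h
  rw [h', zpow_neg, zpow_one]

theorem conj_pow (k : ℤ) : (DG n)⁻¹ * (DF n)^k * (DG n) = (DF n)^(-k) := by
  have h2 : (MulAut.conj ((DG n)⁻¹)) (DF n) = (DF n)⁻¹ := by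
    simpa [MulAut.conj_apply, inv_inv, mul_assoc] using relC (n := n)
  have h1 : (MulAut.conj ((DG n)⁻¹)) ((DF n)^k) = ((DF n)⁻¹)^k := by
    rw [map_zpow, h2]
  simpa [MulAut.conj_apply, inv_inv, zpow_neg, inv_zpow, mul_assoc] using h1

theorem GFk (k : ℤ) : (DG n) * (DF n)^k = (DF n)^(-k) * DG n := by
  have h := conj_pow (n := n) (-k)
  rw [neg_neg] at h
  calc (DG n) * (DF n)^k = (DG n) * ((DG n)⁻¹ * (DF n)^(-k) * DG n) := by rw [h]
    _ = (DF n)^(-k) * DG n := by group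

theorem GG : (DG n) * DG n = (DF n)^(n : ℤ) := by
  have h := relG (n := n)
  rw [pow_two] at h
  rw [h, zpow_natCast]

/-- normal form elements -/
def P (k : ℤ) (b : Bool) : Dicyclic n := (DF n)^k * (cond b (DG n) 1)

theorem P_mul (k l : ℤ) (b c : Bool) : ∃ m d, (P k b * P l c : Dicyclic n) = P m d := by
  cases b with
  | false =>
      refine ⟨k + l, c, ?_⟩
      simp only [P, cond, mul_one, zpow_add]
      group
  | true =>
      cases c with
      | false =>
          refine ⟨k - l, true, ?_⟩
          simp only [P, cond, mul_one]
          calc (DF n)^k * DG n * (DF n)^l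
              = (DF n)^k * (DG n * (DF n)^l) := by group
            _ = (DF n)^k * ((DF n)^(-l) * DG n) := by rw [GFk]
            _ = (DF n)^(k - l) * DG n := by rw [sub_eq_add_neg, zpow_add]; group
      | true =>
          refine ⟨k - l + n, false, ?_⟩
          simp only [P, cond, mul_one]
          calc (DF n)^k * DG n * ((DF n)^l * DG n)
              = (DF n)^k * (DG n * (DF n)^l) * DG n := by group
            _ = (DF n)^k * ((DF n)^(-l) * DG n) * DG n := by rw [GFk]
            _ = (DF n)^k * (DF n)^(-l) * (DG n * DG n) := by group
            _ = (DF n)^k * (DF n)^(-l) * (DF n)^(n : ℤ) := by rw [GG]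
            _ = (DF n)^(k - l + n) := by rw [← zpow_add, ← zpow_add]; ring_nf
  
theorem span (x : Dicyclic n) : ∃ k b, x = P k b := by
  induction x using PresentedGroup.induction_on with
  | H w =>
    induction w using FreeGroup.induction_on with
    | C1 => exact ⟨0, false, by simp [P]; rfl⟩
    | of i =>
        fin_cases i
        · exact ⟨1, false, by show DF n = P 1 false; simp [P]⟩
        · exact ⟨0, true, by show DG n = P 0 true; simp [P]⟩
    | inv_of i _ =>
        fin_cases i
        · refine ⟨-1, false, ?_⟩
          show (DF n)⁻¹ = P (-1) false
          simp [P, zpow_neg, zpow_one]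
        · refine ⟨-(n : ℤ), true, ?_⟩
          show (DG n)⁻¹ = P (-(n:ℤ)) true
          rw [inv_eq_iff_mul_eq_one]
          simp only [P, cond]
          calc DG n * ((DF n)^(-(n:ℤ)) * DG n)
              = (DG n * (DF n)^(-(n:ℤ))) * DG n := by group
            _ = ((DF n)^((n:ℤ)) * DG n) * DG n := by rw [GFk, neg_neg]
            _ = (DF n)^((n:ℤ)) * (DG n * DG n) := by group
            _ = (DF n)^((n:ℤ)) * (DF n)^((n:ℤ)) := by rw [GG]
            _ = (DF n)^(((2*n : ℕ) : ℤ)) := by rw [← zpow_add]; push_cast; ring_nf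
            _ = 1 := by rw [zpow_natCast, relF]
    | mul x y hx hy =>
        rw [map_mul]
        obtain ⟨k, b, hb⟩ := hx
        obtain ⟨l, c, hc⟩ := hy
        rw [hb, hc]
        exact P_mul k l b c

end DicP
end Dic
section Iso
namespace DicP
variable {n : ℕ}

theorem Model.f_zpow (k : ℤ) : (Model.f : Model n) ^ k = ⟨((k : ZMod (2*n))), false⟩ := by
  induction k using Int.induction_on with
  | zero => simp [Model.one_def]
  | succ m ih =>
      rw [zpow_add, zpow_one, ih]
      refine Model.ext' ?_ ?_ <;> simp [Model.mul_def, Model.f] <;> push_cast <;> ring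
  | pred m ih =>
      rw [sub_eq_add_neg, zpow_add, ih, zpow_neg, zpow_one]
      refine Model.ext' ?_ ?_ <;>
        simp [Model.mul_def, Model.inv_def, Model.f] <;> push_cast <;> ring

theorem relsat : ∀ r ∈ rels n, FreeGroup.lift ![Model.f, Model.g] r = (1 : Model n) := by
  intro r hr
  simp only [rels, metacyclicRels, Set.mem_insert_iff, Set.mem_singleton_iff] at hr
  rcases hr with rfl | rfl | rfl
  · rw [map_pow]
    simp only [FreeGroup.lift_apply_of, Matrix.cons_val_zero]
    exact Model.f2n
  · rw [map_mul, map_inv, map_pow, map_pow]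
    simp only [FreeGroup.lift_apply_of, Matrix.cons_val_zero, Matrix.cons_val_one, Matrix.head_cons]
    rw [pow_two, Model.g_sq_eq]
    simp
  · rw [map_mul, map_mul, map_mul, map_inv, map_inv, map_zpow]
    simp only [FreeGroup.lift_apply_of, Matrix.cons_val_zero, Matrix.cons_val_one, Matrix.head_cons]
    rw [Model.conj_rel, zpow_neg, zpow_one, inv_inv]
    simp

def Phi : Dicyclic n →* Model n := PresentedGroup.toGroup relsat

theorem Phi_F : (Phi : Dicyclic n →* Model n) (DF n) = Model.f := by
  show PresentedGroup.toGroup relsat (PresentedGroup.of 0) = Model.f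
  rw [PresentedGroup.toGroup.of]
  simp

theorem Phi_G : (Phi : Dicyclic n →* Model n) (DG n) = Model.g := by
  show PresentedGroup.toGroup relsat (PresentedGroup.of 1) = Model.g
  rw [PresentedGroup.toGroup.of]
  simp

theorem Phi_P (k : ℤ) (b : Bool) :
    (Phi : Dicyclic n →* Model n) (P k b) = ⟨(k : ZMod (2*n)), b⟩ := by
  unfold P
  rw [map_mul, map_zpow, Phi_F, Model.f_zpow]
  cases b with
  | false => simp
  | true =>
      simp only [cond, Phi_G]
      refine Model.ext' ?_ ?_ <;> simp [Model.mul_def, Model.g]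

theorem Phi_bij (hn : 2 ≤ n) : Function.Bijective (Phi : Dicyclic n →* Model n) := by
  haveI : NeZero (2*n) := ⟨by omega⟩
  constructor
  · intro x y hxy
    obtain ⟨k, b, rfl⟩ := span x
    obtain ⟨l, c, rfl⟩ := span y
    rw [Phi_P, Phi_P] at hxy
    have h1 : ((k : ZMod (2*n))) = ((l : ZMod (2*n))) := congrArg Model.a hxy
    have h2 : b = c := congrArg Model.b hxy
    subst h2
    have hF : (DF n)^k = (DF n)^l := by
      have hd : ((2*n : ℕ) : ℤ) ∣ (k - l) := by
        rw [← ZMod.intCast_zmod_eq_zero_iff_dvd]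
        push_cast
        rw [sub_eq_zero]
        exact h1
      obtain ⟨t, ht⟩ := hd
      have hk : k = l + ((2*n : ℕ) : ℤ) * t := by linarith
      rw [hk, zpow_add, zpow_mul, zpow_natCast, relF]
      simp
    unfold P
    rw [hF]
  · intro m
    refine ⟨P ((m.a.val : ℤ)) m.b, ?_⟩
    rw [Phi_P]
    refine Model.ext' ?_ rfl
    show (((m.a.val : ℤ) : ZMod (2*n))) = m.a
    push_cast
    exact ZMod.natCast_zmod_val m.a

noncomputable def E (hn : 2 ≤ n) : Dicyclic n ≃* Model n :=
  MulEquiv.ofBijective _ (Phi_bij hn)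

end DicP
end Iso
section Even
namespace DicP
variable {n : ℕ}

theorem not_split_of_even (hn : 2 ≤ n) (hev : Even n) : ¬ IsSplitMetacyclic (Dicyclic n) := by
  rintro ⟨n', m', φ, hn', hm', ⟨e0⟩⟩
  haveI : NeZero (2*n) := ⟨by omega⟩
  let ee := (E hn).symm.trans e0
  set π := SemidirectProduct.rightHom.comp ee.toMonoidHom with hπ
  by_cases hme : Even m'
  · -- m' even
    obtain ⟨t, hm2⟩ := hme
    have htpos : 0 < t := by omega
    set c : ZMod m' := ((m'/2 : ℕ) : ZMod m') with hc
    have hc0 : c ≠ 0 := by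
      rw [hc, Ne, ZMod.natCast_eq_zero_iff]
      intro hdvd
      have := Nat.le_of_dvd (by omega) hdvd
      omega
    set v : Multiplicative (ZMod n') ⋊[φ] Multiplicative (ZMod m') :=
      SemidirectProduct.inr (Multiplicative.ofAdd c) with hv
    have hv1 : v ≠ 1 := by
      intro h
      apply hc0
      have h2 : SemidirectProduct.rightHom v = 1 := by rw [h, map_one]
      rw [hv, SemidirectProduct.rightHom_inr] at h2
      simpa using h2
    have hv2 : v * v = 1 := by
      rw [hv, ← map_mul, ← ofAdd_add]
      have hcc : c + c = 0 := by
        rw [hc, ← Nat.cast_add, show m'/2 + m'/2 = m' from by omega]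
        exact ZMod.natCast_self m'
      rw [hcc]
      rfl
    have hw := Model.unique_inv hn (ee.symm v) (by rw [← map_mul, hv2, map_one])
    have hwz : ee.symm v = Model.z := by
      rcases hw with h | h
      · exact absurd (by rw [← MulEquiv.apply_symm_apply ee v, h, map_one]) hv1
      · exact h
    have hzv : ee Model.z = v := by rw [← hwz]; simp
    have hπf : π Model.f = (π Model.f)⁻¹ := by
      have h := congrArg π Model.conj_rel
      rw [map_mul, map_mul, map_inv, map_inv] at h
      calc π Model.f = (π Model.g)⁻¹ * π Model.f * π Model.g := by
            rw [mul_comm ((π Model.g)⁻¹) (π Model.f), mul_assoc, inv_mul_cancel, mul_one]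
        _ = (π Model.f)⁻¹ := h
    have hπf2 : π Model.f * π Model.f = 1 := by
      nth_rewrite 2 [hπf]
      exact mul_inv_cancel _
    obtain ⟨k, hk⟩ := hev
    have hgen : ∀ u : Multiplicative (ZMod m'), u * u = 1 → u ^ n = 1 := by
      intro u hu
      rw [hk, pow_add, ← mul_pow, hu, one_pow]
    have hπz : π Model.z = 1 := by
      rw [← Model.f_pow_n, map_pow]
      exact hgen _ hπf2
    have hfin : π Model.z = Multiplicative.ofAdd c := by
      have : π Model.z = SemidirectProduct.rightHom (ee Model.z) := rfl
      rw [this, hzv, hv, SemidirectProduct.rightHom_inr]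
    rw [hπz] at hfin
    exact hc0 (by simpa using hfin.symm)
  · -- m' odd
    have hmodd : Odd m' := Nat.not_even_iff_odd.mp hme
    haveI : NeZero m' := ⟨hm'.ne'⟩
    have key : ∀ x : Model n, x^4 = 1 →
        ∃ a, ee x = SemidirectProduct.inl a := by
      intro x hx
      have h4 : (π x)^4 = 1 := by rw [← map_pow, hx, map_one]
      have hord : orderOf (π x) ∣ 4 := orderOf_dvd_of_pow_eq_one h4
      have hord2 : orderOf (π x) ∣ m' := by
        have h5 := orderOf_dvd_natCard (π x)
        rwa [Nat.card_congr Multiplicative.toAdd, Nat.card_zmod] at h5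
      have hcop : Nat.Coprime 4 m' := by
        have h2 : Nat.Coprime 2 m' := hmodd.coprime_two_left
        exact Nat.Coprime.pow_left 2 h2
      have hg := Nat.dvd_gcd hord hord2
      rw [Nat.Coprime] at hcop
      rw [hcop] at hg
      have hπx : π x = 1 := orderOf_eq_one_iff.mp (Nat.dvd_one.mp hg)
      have hker : ee x ∈ SemidirectProduct.rightHom.ker := hπx
      rw [← SemidirectProduct.range_inl_eq_ker_rightHom] at hker
      obtain ⟨a, ha⟩ := hker
      exact ⟨a, ha.symm⟩
    obtain ⟨a, ha⟩ := key Model.g Model.g_pow4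
    obtain ⟨b2, hb2⟩ := key (Model.f * Model.g) Model.fg_pow4
    have hf : ee Model.f = SemidirectProduct.inl (b2 * a⁻¹) := by
      have h7 : ee Model.f = ee (Model.f * Model.g) * (ee Model.g)⁻¹ := by
        rw [map_mul]; group
      rw [h7, ha, hb2, ← map_inv, ← map_mul]
    have hcomm : ee (Model.f * Model.g) = ee (Model.g * Model.f) := by
      rw [map_mul, map_mul, hf, ha, ← map_mul, ← map_mul, mul_comm]
    exact Model.fg_ne_gf hn (ee.injective hcomm)

end DicP
end Even
section OddDir
namespace DicP
variable {n : ℕ}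

def iota (n : ℕ) : MulAut (Multiplicative (ZMod n)) := MulEquiv.inv _

theorem iota_sq : (iota n) ^ 2 = 1 := by
  ext x
  simp [iota, pow_two]

theorem iota_pow_mod (j k : ℕ) (h : j % 2 = k % 2) : (iota n) ^ j = (iota n) ^ k := by
  have h2 : ∀ m : ℕ, (iota n) ^ m = (iota n) ^ (m % 2) := by
    intro m
    conv_lhs => rw [← Nat.div_add_mod m 2]
    rw [pow_add, pow_mul, iota_sq, one_pow, one_mul]
  rw [h2 j, h2 k, h]

def phi0 (n : ℕ) : Multiplicative (ZMod 4) →* MulAut (Multiplicative (ZMod n)) where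
  toFun y := (iota n) ^ (Multiplicative.toAdd y).val
  map_one' := by
    show (iota n) ^ (Multiplicative.toAdd (1 : Multiplicative (ZMod 4))).val = 1
    rw [toAdd_one, ZMod.val_zero, pow_zero]
  map_mul' a b := by
    show (iota n) ^ (Multiplicative.toAdd (a*b)).val =
      (iota n) ^ (Multiplicative.toAdd a).val * (iota n) ^ (Multiplicative.toAdd b).val
    rw [← pow_add]
    apply iota_pow_mod
    have hv : (Multiplicative.toAdd (a * b)).val =
        ((Multiplicative.toAdd a).val + (Multiplicative.toAdd b).val) % 4 :=
      ZMod.val_add _ _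
    rw [hv]
    omega

abbrev SPn (n : ℕ) := Multiplicative (ZMod n) ⋊[phi0 n] Multiplicative (ZMod 4)

theorem phi0_one_eq : phi0 n (Multiplicative.ofAdd (1 : ZMod 4)) = iota n := by
  show (iota n) ^ (1 : ZMod 4).val = iota n
  rw [show (1 : ZMod 4).val = 1 from rfl, pow_one]

theorem phi0_two_eq : phi0 n (Multiplicative.ofAdd (2 : ZMod 4)) = 1 := by
  show (iota n) ^ (2 : ZMod 4).val = 1
  rw [show (2 : ZMod 4).val = 2 from rfl, iota_sq]

def aa (n : ℕ) : SPn n := SemidirectProduct.inl (Multiplicative.ofAdd (1 : ZMod n))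
def bb (n : ℕ) : SPn n := SemidirectProduct.inr (Multiplicative.ofAdd (1 : ZMod 4))
def uu (n : ℕ) : SPn n := SemidirectProduct.inr (Multiplicative.ofAdd (2 : ZMod 4))
def sbar (n : ℕ) : ZMod n := (((n+1)/2 : ℕ) : ZMod n)
def aas (n : ℕ) : SPn n := SemidirectProduct.inl (Multiplicative.ofAdd (sbar n))
def xF (n : ℕ) : SPn n := aas n * uu n

theorem hcommu (x : Multiplicative (ZMod n)) :
    uu n * SemidirectProduct.inl x = SemidirectProduct.inl x * uu n := by
  have h := SemidirectProduct.inl_aut (φ := phi0 n) (Multiplicative.ofAdd (2 : ZMod 4)) x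
  rw [phi0_two_eq] at h
  simp only [MulAut.one_apply, map_inv] at h
  rw [show SemidirectProduct.inr (Multiplicative.ofAdd (2 : ZMod 4)) = uu n from rfl] at h
  rw [eq_comm, mul_inv_eq_iff_eq_mul] at h
  exact h

theorem huu2 : uu n * uu n = 1 := by
  rw [uu, ← map_mul, ← ofAdd_add]
  rw [show (2 : ZMod 4) + 2 = 0 from by decide]
  simp

theorem hbb2 : bb n * bb n = uu n := by
  rw [bb, uu, ← map_mul, ← ofAdd_add]
  norm_num

theorem hconjb (x : Multiplicative (ZMod n)) :
    (bb n)⁻¹ * SemidirectProduct.inl x * bb n = SemidirectProduct.inl x⁻¹ := by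
  have h := SemidirectProduct.inl_aut_inv (φ := phi0 n) (Multiplicative.ofAdd (1 : ZMod 4)) x
  rw [phi0_one_eq] at h
  have hi : (iota n)⁻¹ x = x⁻¹ := by
    have h9 : (iota n)⁻¹ = iota n := by
      rw [inv_eq_iff_mul_eq_one, ← pow_two, iota_sq]
    rw [h9]
    simp [iota]
  rw [hi] at h
  simp only [map_inv] at h
  rw [show SemidirectProduct.inr (Multiplicative.ofAdd (1 : ZMod 4)) = bb n from rfl] at h
  rw [map_inv]
  exact h.symm

theorem haaspow (k : ℕ) : (aas n) ^ k = SemidirectProduct.inl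
    (Multiplicative.ofAdd ((k : ZMod n) * sbar n)) := by
  rw [aas, ← map_pow]
  congr 1
  rw [← ofAdd_nsmul, nsmul_eq_mul]

theorem aa_pow (k : ℕ) :
    (aa n) ^ k = SemidirectProduct.inl (Multiplicative.ofAdd ((k : ZMod n))) := by
  rw [aa, ← map_pow]
  congr 1
  rw [← ofAdd_nsmul, nsmul_eq_mul, mul_one]

theorem bb_pow (k : ℕ) :
    (bb n) ^ k = SemidirectProduct.inr (Multiplicative.ofAdd ((k : ZMod 4))) := by
  rw [bb, ← map_pow]
  congr 1
  rw [← ofAdd_nsmul, nsmul_eq_mul, mul_one]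

theorem hcomm' : Commute (aas n) (uu n) := (hcommu _).symm

theorem hxF2n : (xF n) ^ (2*n) = 1 := by
  rw [xF, (hcomm' (n := n)).mul_pow, haaspow]
  have h1 : ((2*n : ℕ) : ZMod n) * sbar n = 0 := by
    push_cast
    rw [ZMod.natCast_self]
    ring
  rw [h1]
  have h2 : (uu n) ^ (2*n) = 1 := by
    rw [pow_mul, pow_two, huu2, one_pow]
  rw [h2]
  simp

theorem huun (ho : Odd n) : (uu n) ^ n = uu n := by
  obtain ⟨j, hj⟩ := ho
  have : n = 2*j + 1 := by omega
  rw [this, pow_add, pow_mul, pow_two, huu2, one_pow, one_mul, pow_one]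

theorem hxFn (ho : Odd n) : (xF n) ^ n = uu n := by
  rw [xF, (hcomm' (n := n)).mul_pow, haaspow]
  have h1 : ((n : ℕ) : ZMod n) * sbar n = 0 := by
    rw [ZMod.natCast_self]
    ring
  rw [h1, huun ho]
  simp

theorem inl_inv (x : Multiplicative (ZMod n)) :
    (SemidirectProduct.inl (φ := phi0 n) x)⁻¹ = SemidirectProduct.inl x⁻¹ :=
  (map_inv (SemidirectProduct.inl (φ := phi0 n)) x).symm

theorem huuinv : (uu n)⁻¹ = uu n := by rw [inv_eq_iff_mul_eq_one, huu2]

theorem hconjF : (bb n)⁻¹ * xF n * bb n = (xF n)⁻¹ := by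
  have h2 : (bb n)⁻¹ * uu n * bb n = uu n := by
    rw [bb, uu]
    rw [show (SemidirectProduct.inr (φ := phi0 n) (Multiplicative.ofAdd (1 : ZMod 4)))⁻¹ =
      SemidirectProduct.inr (Multiplicative.ofAdd (1 : ZMod 4))⁻¹ from
      (map_inv (SemidirectProduct.inr (φ := phi0 n)) _).symm]
    rw [← map_mul, ← map_mul]
    congr 1 <;> decide
  calc (bb n)⁻¹ * xF n * bb n
      = ((bb n)⁻¹ * aas n * bb n) * ((bb n)⁻¹ * uu n * bb n) := by rw [xF]; group
    _ = SemidirectProduct.inl ((Multiplicative.ofAdd (sbar n))⁻¹) * uu n := by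
        rw [h2, aas, hconjb]
    _ = (xF n)⁻¹ := by rw [xF, mul_inv_rev, huuinv, aas, inl_inv, hcommu]

theorem hrel (ho : Odd n) :
    ∀ r ∈ rels n, FreeGroup.lift ![xF n, bb n] r = (1 : SPn n) := by
  intro r hr
  simp only [rels, metacyclicRels, Set.mem_insert_iff, Set.mem_singleton_iff] at hr
  rcases hr with rfl | rfl | rfl
  · rw [map_pow]
    simp only [FreeGroup.lift_apply_of, Matrix.cons_val_zero]
    exact hxF2n
  · rw [map_mul, map_inv, map_pow, map_pow]
    simp only [FreeGroup.lift_apply_of, Matrix.cons_val_zero, Matrix.cons_val_one, Matrix.head_cons]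
    rw [pow_two, hbb2, hxFn ho]
    simp
  · rw [map_mul, map_mul, map_mul, map_inv, map_inv, map_zpow]
    simp only [FreeGroup.lift_apply_of, Matrix.cons_val_zero, Matrix.cons_val_one, Matrix.head_cons]
    rw [hconjF, zpow_neg, zpow_one, inv_inv]
    simp

theorem split_of_odd (hn : 2 ≤ n) (ho : Odd n) : IsSplitMetacyclic (Dicyclic n) := by
  haveI : NeZero n := ⟨by omega⟩
  obtain ⟨j, hj⟩ := id ho
  set Ψ : Dicyclic n →* SPn n := PresentedGroup.toGroup (hrel ho) with hΨ
  have hΨF : Ψ (DF n) = xF n := by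
    show PresentedGroup.toGroup (hrel ho) (PresentedGroup.of 0) = xF n
    rw [PresentedGroup.toGroup.of]
    simp
  have hΨG : Ψ (DG n) = bb n := by
    show PresentedGroup.toGroup (hrel ho) (PresentedGroup.of 1) = bb n
    rw [PresentedGroup.toGroup.of]
    simp
  have hbbmem : bb n ∈ Ψ.range := ⟨DG n, hΨG⟩
  have hxFmem : xF n ∈ Ψ.range := ⟨DF n, hΨF⟩
  have huumem : uu n ∈ Ψ.range := by
    rw [← hbb2]; exact mul_mem hbbmem hbbmem
  have haasmem : aas n ∈ Ψ.range := by
    have h5 : aas n = xF n * (uu n)⁻¹ := by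
      rw [xF, mul_assoc, mul_inv_cancel, mul_one]
    rw [h5]
    exact mul_mem hxFmem (inv_mem huumem)
  have haamem : aa n ∈ Ψ.range := by
    have h2s : aas n * aas n = aa n := by
      rw [aas, aa, ← map_mul, ← ofAdd_add]
      congr 2
      rw [sbar, ← Nat.cast_add, show (n+1)/2 + (n+1)/2 = n + 1 from by omega]
      push_cast
      rw [ZMod.natCast_self]
      ring
    rw [← h2s]
    exact mul_mem haasmem haasmem
  have hsurj : Function.Surjective Ψ := by
    intro x
    have hx : x = SemidirectProduct.inl x.left * SemidirectProduct.inr x.right :=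
      (SemidirectProduct.inl_left_mul_inr_right x).symm
    have hl : SemidirectProduct.inl x.left = aa n ^ (Multiplicative.toAdd x.left).val := by
      rw [aa_pow, ZMod.natCast_zmod_val]
      simp
    have hr : SemidirectProduct.inr x.right = bb n ^ (Multiplicative.toAdd x.right).val := by
      rw [bb_pow, ZMod.natCast_zmod_val]
      simp
    have hmem : x ∈ Ψ.range := by
      rw [hx, hl, hr]
      exact mul_mem (pow_mem haamem _) (pow_mem hbbmem _)
    exact hmem
  haveI : NeZero (2*n) := ⟨by omega⟩
  have equivM : Model n ≃ (ZMod (2*n) × Bool) :=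
    ⟨fun m => (m.a, m.b), fun p => ⟨p.1, p.2⟩, fun m => rfl, fun p => rfl⟩
  have equivSP : SPn n ≃ (ZMod n × ZMod 4) :=
    ⟨fun x => (Multiplicative.toAdd x.left, Multiplicative.toAdd x.right),
     fun p => ⟨Multiplicative.ofAdd p.1, Multiplicative.ofAdd p.2⟩,
     fun x => rfl, fun p => rfl⟩
  haveI : Finite (Model n) := Finite.of_equiv _ equivM.symm
  haveI : Finite (Dicyclic n) := Finite.of_equiv _ (E hn).toEquiv.symm
  haveI : Finite (SPn n) := Finite.of_equiv _ equivSP.symm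
  have hcard : Nat.card (Dicyclic n) = Nat.card (SPn n) := by
    rw [Nat.card_congr (E hn).toEquiv, Nat.card_congr equivM, Nat.card_congr equivSP,
      Nat.card_prod, Nat.card_prod, Nat.card_zmod, Nat.card_zmod, Nat.card_zmod]
    rw [show Nat.card Bool = 2 from by simp]
    ring
  have hbij : Function.Bijective Ψ := by
    haveI := Fintype.ofFinite (Dicyclic n)
    haveI := Fintype.ofFinite (SPn n)
    rw [Nat.card_eq_fintype_card, Nat.card_eq_fintype_card] at hcard
    exact (Fintype.bijective_iff_surjective_and_card Ψ).mpr ⟨hsurj, hcard⟩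
  exact ⟨n, 4, phi0 n, by omega, by norm_num, ⟨MulEquiv.ofBijective Ψ hbij⟩⟩

end DicP
end OddDir

/-- `Dic_n` is split metacyclic if and only if `n` is odd. -/
theorem stmt3 (n : ℕ) (hn : 2 ≤ n) : IsSplitMetacyclic (Dicyclic n) ↔ Odd n := by
  constructor
  · intro h
    by_contra ho
    exact DicP.not_split_of_even hn (Nat.not_odd_iff_even.mp ho) h
  · exact DicP.split_of_odd hn
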